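/- Fix λ ∈ ℝ and let 𝔊₁₀^λ be the 7-dimensional real Lie algebra with basis (X₁,X₂,X₃,X₄,X₅,X,Y) and nonzero brackets [X₁,X₂]=X₄, [X₁,X₃]=X₅, [X,X₂]=X₂, [X,X₃]=λX₃, [X,X₄]=X₄, [X,X₅]=λX₅, [Y,X₃]=X₃+X₅, [Y,X₅]=X₅. For F ∈ (𝔊₁₀^λ)* with coordinates (α₁,α₂,α₃,α₄,α₅,α,β) in the dual basis, let B_F be the skew-symmetric bilinear form on 𝔊₁₀^λ defined by B_F(A,B) = ⟨F,[A,B]⟩. Then the rank of B_F equals 6 if and only if either (α₄ = 0 and α₂α₅ ≠ 0) or (α₄ ≠ 0 and (α₃ ≠ 0 or α₅ ≠ 0)); in particular the maximal possible rank of B_F over all F is 6. -/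

import Mathlib

noncomputable section

/-- Half of the structure constants of the Lie algebra 𝔊₁₀^λ: `g10half l i j` is the
coordinate vector of `[Xᵢ, Xⱼ]` for the ordered pairs `(i,j)` listed in the paper
(indices `0,…,4` are `X₁,…,X₅`, index `5` is `X`, index `6` is `Y`). -/
def g10half (l : ℝ) (i j : Fin 7) : Fin 7 → ℝ :=
  if i = 0 ∧ j = 1 then Pi.single 3 1      -- [X₁,X₂] = X₄
  else if i = 0 ∧ j = 2 then Pi.single 4 1 -- [X₁,X₃] = X₅
  else if i = 5 ∧ j = 1 then Pi.single 1 1 -- [X,X₂] = X₂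
  else if i = 5 ∧ j = 2 then Pi.single 2 l -- [X,X₃] = λX₃
  else if i = 5 ∧ j = 3 then Pi.single 3 1 -- [X,X₄] = X₄
  else if i = 5 ∧ j = 4 then Pi.single 4 l -- [X,X₅] = λX₅
  else if i = 6 ∧ j = 2 then Pi.single 2 1 + Pi.single 4 1 -- [Y,X₃] = X₃+X₅
  else if i = 6 ∧ j = 4 then Pi.single 4 1 -- [Y,X₅] = X₅
  else 0

/-- The bracket `[Xᵢ, Xⱼ]` (in coordinates) of basis vectors of 𝔊₁₀^λ. -/
def g10br (l : ℝ) (i j : Fin 7) : Fin 7 → ℝ := g10half l i j - g10half l j i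

/-- The Gram matrix of the bilinear form `B_F(A,B) = ⟨F,[A,B]⟩` in the given basis,
where `α` is the coordinate vector of `F` in the dual basis. -/
def gramG10 (l : ℝ) (α : Fin 7 → ℝ) : Matrix (Fin 7) (Fin 7) ℝ :=
  Matrix.of fun i j => ∑ k, α k * g10br l i j k

open Matrix

namespace G10Rank

section VecEval
variable {β : Type*} (a0 a1 a2 a3 a4 a5 a6 : β)
@[simp] lemma v7e0 : ![a0,a1,a2,a3,a4,a5,a6] 0 = a0 := rfl
@[simp] lemma v7e1 : ![a0,a1,a2,a3,a4,a5,a6] 1 = a1 := rfl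
@[simp] lemma v7e2 : ![a0,a1,a2,a3,a4,a5,a6] 2 = a2 := rfl
@[simp] lemma v7e3 : ![a0,a1,a2,a3,a4,a5,a6] 3 = a3 := rfl
@[simp] lemma v7e4 : ![a0,a1,a2,a3,a4,a5,a6] 4 = a4 := rfl
@[simp] lemma v7e5 : ![a0,a1,a2,a3,a4,a5,a6] 5 = a5 := rfl
@[simp] lemma v7e6 : ![a0,a1,a2,a3,a4,a5,a6] 6 = a6 := rfl
@[simp] lemma v6e0 : ![a0,a1,a2,a3,a4,a5] 0 = a0 := rfl
@[simp] lemma v6e1 : ![a0,a1,a2,a3,a4,a5] 1 = a1 := rfl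
@[simp] lemma v6e2 : ![a0,a1,a2,a3,a4,a5] 2 = a2 := rfl
@[simp] lemma v6e3 : ![a0,a1,a2,a3,a4,a5] 3 = a3 := rfl
@[simp] lemma v6e4 : ![a0,a1,a2,a3,a4,a5] 4 = a4 := rfl
@[simp] lemma v6e5 : ![a0,a1,a2,a3,a4,a5] 5 = a5 := rfl
end VecEval

set_option maxHeartbeats 2000000 in
lemma gram_eq (l : ℝ) (α : Fin 7 → ℝ) :
    gramG10 l α =
    !![0, α 3, α 4, 0, 0, 0, 0;
       -α 3, 0, 0, 0, 0, -α 1, 0;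
       -α 4, 0, 0, 0, 0, -(α 2 * l), -(α 2 + α 4);
       0, 0, 0, 0, 0, -α 3, 0;
       0, 0, 0, 0, 0, -(α 4 * l), -α 4;
       0, α 1, α 2 * l, α 3, α 4 * l, 0, 0;
       0, 0, α 2 + α 4, 0, α 4, 0, 0] := by
  ext i j
  fin_cases i <;> fin_cases j <;>
    (simp [gramG10, g10br, g10half, Fin.sum_univ_seven, Pi.single_apply];
      first | rfl | ring | skip)

lemma gram_skew (l : ℝ) (α : Fin 7 → ℝ) : (gramG10 l α)ᵀ = -(gramG10 l α) := by
  ext i j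
  simp only [transpose_apply, Matrix.neg_apply, gramG10, of_apply, g10br, Pi.sub_apply]
  rw [← Finset.sum_neg_distrib]
  exact Finset.sum_congr rfl fun k _ => by ring

lemma rank_le_of_ker {n : ℕ} (M : Matrix (Fin n) (Fin n) ℝ) (k : ℕ)
    (h : k ≤ Module.finrank ℝ (LinearMap.ker M.mulVecLin)) : M.rank ≤ n - k := by
  have h2 := LinearMap.finrank_range_add_finrank_ker M.mulVecLin
  rw [Module.finrank_fintype_fun_eq_card, Fintype.card_fin] at h2
  have : M.rank = Module.finrank ℝ (LinearMap.range M.mulVecLin) := rfl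
  omega

lemma rank_le_five_of_two_zero_cols (M : Matrix (Fin 7) (Fin 7) ℝ) (i j : Fin 7) (hij : i ≠ j)
    (hi : ∀ k, M k i = 0) (hj : ∀ k, M k j = 0) : M.rank ≤ 5 := by
  have hmem : ∀ x : Fin 7, (∀ k, M k x = 0) → Pi.single x (1:ℝ) ∈ LinearMap.ker M.mulVecLin := by
    intro x hx
    rw [LinearMap.mem_ker, mulVecLin_apply, mulVec_single]
    ext k; simp [hx k]
  have hinj : Function.Injective ![i, j] := by
    intro a b hab
    fin_cases a <;> fin_cases b <;> simp_all
  have li : LinearIndependent ℝ (fun s : Fin 2 => (Pi.single (![i,j] s) (1:ℝ) : Fin 7 → ℝ)) := by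
    have h := (Pi.basisFun ℝ (Fin 7)).linearIndependent.comp ![i,j] hinj
    have he : (⇑(Pi.basisFun ℝ (Fin 7)) ∘ ![i, j]) = fun s : Fin 2 =>
        (Pi.single (![i,j] s) (1:ℝ) : Fin 7 → ℝ) := by
      funext s; simp [Function.comp, Pi.basisFun_apply]
    rwa [he] at h
  have hspan : Submodule.span ℝ (Set.range fun s : Fin 2 =>
      (Pi.single (![i,j] s) (1:ℝ) : Fin 7 → ℝ)) ≤ LinearMap.ker M.mulVecLin := by
    rw [Submodule.span_le]
    rintro _ ⟨s, rfl⟩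
    fin_cases s
    · exact hmem i hi
    · exact hmem j hj
  have h2 : Module.finrank ℝ (Submodule.span ℝ (Set.range fun s : Fin 2 =>
      (Pi.single (![i,j] s) (1:ℝ) : Fin 7 → ℝ))) = 2 := by
    rw [finrank_span_eq_card li, Fintype.card_fin]
  have h3 := Submodule.finrank_mono hspan
  exact rank_le_of_ker M 2 (by omega)

lemma six_le_rank (M : Matrix (Fin 7) (Fin 7) ℝ) (g h : Fin 6 → Fin 7)
    (hdet : (M.submatrix g h).det ≠ 0) : 6 ≤ M.rank := by
  have h1 : M.submatrix g h = ((1 : Matrix (Fin 7) (Fin 7) ℝ).submatrix g (Equiv.refl (Fin 7))) *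
      (M * ((1 : Matrix (Fin 7) (Fin 7) ℝ).submatrix (Equiv.refl (Fin 7)) h)) := by
    rw [mul_submatrix_one, one_submatrix_mul, submatrix_submatrix]
    simp [Function.comp_def]
  have h2 : (M.submatrix g h).rank = 6 := by
    rw [rank_of_isUnit _ ((isUnit_iff_isUnit_det _).2 (isUnit_iff_ne_zero.2 hdet)),
      Fintype.card_fin]
  calc (6:ℕ) = (M.submatrix g h).rank := h2.symm
    _ ≤ _ := by
        rw [h1]
        exact (rank_mul_le_right _ _).trans (rank_mul_le_left _ _)

lemma rank_le_six_of_skew (M : Matrix (Fin 7) (Fin 7) ℝ) (hskew : Mᵀ = -M) : M.rank ≤ 6 := by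
  have hdet : M.det = 0 := by
    have h : M.det = -M.det := by
      conv_lhs => rw [← det_transpose, hskew]
      rw [det_neg]
      norm_num
    linarith
  obtain ⟨v, hv, hv0⟩ := (Matrix.exists_mulVec_eq_zero_iff).2 hdet
  have hker : (1:ℕ) ≤ Module.finrank ℝ (LinearMap.ker M.mulVecLin) := by
    have hne : LinearMap.ker M.mulVecLin ≠ ⊥ :=
      (Submodule.ne_bot_iff _).2 ⟨v, by simpa [mulVecLin_apply] using hv0, hv⟩
    have h0 : Module.finrank ℝ (LinearMap.ker M.mulVecLin) ≠ 0 := fun h0 =>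
      hne (Submodule.finrank_eq_zero.mp h0)
    omega
  simpa using rank_le_of_ker M 1 hker

end G10Rank

open G10Rank Matrix

/-- For `F ∈ (𝔊₁₀^λ)*` with coordinates `(α₁,…,α₅,α,β)`, the rank of `B_F` is `6`
iff either (`α₄ = 0` and `α₂α₅ ≠ 0`) or (`α₄ ≠ 0` and (`α₃ ≠ 0` or `α₅ ≠ 0`));
in particular the maximal rank is `6`. -/
theorem rank_BF_G10 (l : ℝ) :
    (∀ α : Fin 7 → ℝ, (gramG10 l α).rank ≤ 6) ∧
    (∀ α : Fin 7 → ℝ,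
      (gramG10 l α).rank = 6 ↔
        ((α 3 = 0 ∧ α 1 * α 4 ≠ 0) ∨ (α 3 ≠ 0 ∧ (α 2 ≠ 0 ∨ α 4 ≠ 0)))) := by
  have hle : ∀ α : Fin 7 → ℝ, (gramG10 l α).rank ≤ 6 :=
    fun α => rank_le_six_of_skew _ (gram_skew l α)
  refine ⟨hle, fun α => ⟨?_, ?_⟩⟩
  · -- rank = 6 → condition
    intro h6
    by_contra hc
    push_neg at hc
    obtain ⟨h1, h2⟩ := hc
    have h5 : (gramG10 l α).rank ≤ 5 := by
      by_cases h3 : α 3 = 0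
      · rcases mul_eq_zero.mp (h1 h3) with h|h
        · -- columns 1 and 3 vanish
          refine rank_le_five_of_two_zero_cols _ 1 3 (by decide) ?_ ?_ <;>
            (rw [gram_eq]; intro k; fin_cases k) <;>
            first
              | rfl
              | exact h3
              | exact h
        · -- columns 3 and 4 vanish
          refine rank_le_five_of_two_zero_cols _ 3 4 (by decide) ?_ ?_ <;>
            (rw [gram_eq]; intro k; fin_cases k) <;>
            first
              | rfl
              | exact h3
              | exact h
              | (show α 4 * l = 0; rw [h]; ring)
      · obtain ⟨h2', h4'⟩ := h2 h3
        -- columns 2 and 4 vanish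
        refine rank_le_five_of_two_zero_cols _ 2 4 (by decide) ?_ ?_ <;>
          (rw [gram_eq]; intro k; fin_cases k) <;>
          first
            | rfl
            | exact h4'
            | (show α 2 * l = 0; rw [h2']; ring)
            | (show α 2 + α 4 = 0; rw [h2', h4']; ring)
            | (show α 4 * l = 0; rw [h4']; ring)
    omega
  · -- condition → rank = 6
    rintro (⟨h3, h14⟩ | ⟨h3, h24⟩)
    · -- α 3 = 0, α 1 * α 4 ≠ 0
      have ha1 : α 1 ≠ 0 := left_ne_zero_of_mul h14
      have ha4 : α 4 ≠ 0 := right_ne_zero_of_mul h14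
      have hB : (gramG10 l α).submatrix ![5,2,6,0,4,1] ![1,0,4,2,6,5] =
          !![α 1, 0, α 4 * l, α 2 * l, 0, 0;
             0, -α 4, 0, 0, -(α 2 + α 4), -(α 2 * l);
             0, 0, α 4, α 2 + α 4, 0, 0;
             0, 0, 0, α 4, 0, 0;
             0, 0, 0, 0, -α 4, -(α 4 * l);
             0, 0, 0, 0, 0, -α 1] := by
        rw [gram_eq]
        ext i j
        fin_cases i <;> fin_cases j <;>
          first
            | rfl
            | exact h3
            | (show -α 3 = (0:ℝ); rw [h3]; ring)
      refine le_antisymm (hle α) (six_le_rank _ ![5,2,6,0,4,1] ![1,0,4,2,6,5] ?_)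
      rw [hB, det_of_upperTriangular ?tri, Fin.prod_univ_six]
      case tri =>
        intro i j hij
        fin_cases i <;> fin_cases j <;> first | rfl | exact absurd hij (by decide)
      show α 1 * -α 4 * (α 4) * (α 4) * -α 4 * -α 1 ≠ 0
      exact mul_ne_zero (mul_ne_zero (mul_ne_zero (mul_ne_zero (mul_ne_zero ha1
        (neg_ne_zero.2 ha4)) ha4) ha4) (neg_ne_zero.2 ha4)) (neg_ne_zero.2 ha1)
    · by_cases h4 : α 4 = 0
      · -- α 3 ≠ 0, α 4 = 0, hence α 2 ≠ 0
        have h2 : α 2 ≠ 0 := by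
          rcases h24 with h | h
          · exact h
          · exact absurd h4 h
        have hB : (gramG10 l α).submatrix ![5,1,0,6,2,3] ![3,0,1,2,6,5] =
            !![α 3, 0, α 1, α 2 * l, 0, 0;
               0, -α 3, 0, 0, 0, -α 1;
               0, 0, α 3, α 4, 0, 0;
               0, 0, 0, α 2 + α 4, 0, 0;
               0, 0, 0, 0, -(α 2 + α 4), -(α 2 * l);
               0, 0, 0, 0, 0, -α 3] := by
          rw [gram_eq]
          ext i j
          fin_cases i <;> fin_cases j <;>
            first
              | rfl
              | (show -α 4 = (0:ℝ); rw [h4]; ring)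
        have hs : α 2 + α 4 ≠ 0 := by rw [h4, add_zero]; exact h2
        refine le_antisymm (hle α) (six_le_rank _ ![5,1,0,6,2,3] ![3,0,1,2,6,5] ?_)
        rw [hB, det_of_upperTriangular ?tri, Fin.prod_univ_six]
        case tri =>
          intro i j hij
          fin_cases i <;> fin_cases j <;> first | rfl | exact absurd hij (by decide)
        show α 3 * -α 3 * (α 3) * (α 2 + α 4) * -(α 2 + α 4) * -α 3 ≠ 0
        exact mul_ne_zero (mul_ne_zero (mul_ne_zero (mul_ne_zero (mul_ne_zero h3
          (neg_ne_zero.2 h3)) h3) hs) (neg_ne_zero.2 hs)) (neg_ne_zero.2 h3)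
      · -- α 3 ≠ 0, α 4 ≠ 0
        have hB : (gramG10 l α).submatrix ![5,1,0,6,4,3] ![3,0,1,4,6,5] =
            !![α 3, 0, α 1, α 4 * l, 0, 0;
               0, -α 3, 0, 0, 0, -α 1;
               0, 0, α 3, 0, 0, 0;
               0, 0, 0, α 4, 0, 0;
               0, 0, 0, 0, -α 4, -(α 4 * l);
               0, 0, 0, 0, 0, -α 3] := by
          rw [gram_eq]
          ext i j
          fin_cases i <;> fin_cases j <;> rfl
        refine le_antisymm (hle α) (six_le_rank _ ![5,1,0,6,4,3] ![3,0,1,4,6,5] ?_)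
        rw [hB, det_of_upperTriangular ?tri, Fin.prod_univ_six]
        case tri =>
          intro i j hij
          fin_cases i <;> fin_cases j <;> first | rfl | exact absurd hij (by decide)
        show α 3 * -α 3 * (α 3) * (α 4) * -α 4 * -α 3 ≠ 0
        exact mul_ne_zero (mul_ne_zero (mul_ne_zero (mul_ne_zero (mul_ne_zero h3
          (neg_ne_zero.2 h3)) h3) h4) (neg_ne_zero.2 h4)) (neg_ne_zero.2 h3)

end
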